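/- arXiv:1803.06046 — 2 statements merged into one kernel-verified Lean document; each statement's English description precedes it below -/
import Mathlib

section
/- Let P, P' be two probability measures on a product space ∏_{t=0}^{k} (X × Y × U) constructed sequentially from the same initial distribution, the same observation channel Q, the same (deterministic) policy γ, but with transition kernels Tₙ and T respectively (strategic measures). Then ‖P^γ_{Tₙ}(d(x,y,u)_{[0,k]}) − P^γ_{T}(d(x,y,u)_{[0,k]})‖_TV ≤ k · sup_{x∈X, u∈U} ‖Tₙ(·|x,u) − T(·|x,u)‖_TV. -/
open MeasureTheory Filter Topology
open scoped ENNReal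

/-- Total variation distance: `‖μ − ν‖_TV = 2 · sup_B |μ(B) − ν(B)|`. -/
noncomputable def tvDist {W : Type*} [MeasurableSpace W] (μ ν : Measure W) : ℝ :=
  2 * ⨆ B : {s : Set W // MeasurableSet s}, |(μ B.1).toReal - (ν B.1).toReal|

/-- The strategic measure on trajectories `(x_t, y_t, u_t)_{t=0}^k` induced by
an initial distribution `P`, observation channel `Q`, deterministic policy `γ`
(a function of the observation history) and transition kernel `T`:
`P(dx₀)Q(dy₀|x₀)1_{γ(y₀)∈du₀} T(dx₁|x₀,u₀)Q(dy₁|x₁)1_{γ(y₀,y₁)∈du₁} ⋯`. -/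
noncomputable def strat {X Y U : Type*} [MeasurableSpace X] [MeasurableSpace Y]
    [MeasurableSpace U]
    (P : Measure X) (Q : X → Measure Y) (γ : (k : ℕ) → (Fin (k + 1) → Y) → U)
    (T : X → U → Measure X) : (k : ℕ) → Measure (Fin (k + 1) → X × Y × U)
  | 0 => P.bind (fun x => (Q x).map (fun y => fun _ => (x, y, γ 0 (fun _ => y))))
  | (k + 1) =>
      (strat P Q γ T k).bind (fun h =>
        ((T (h (Fin.last k)).1 (h (Fin.last k)).2.2).bind (fun x' =>
          (Q x').map (fun y' =>
            (x', y', γ (k + 1) (Fin.snoc (fun i => (h i).2.1) y'))))).map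
          (Fin.snoc h))

namespace TV8

open scoped ENNReal
open ProbabilityTheory

instance instNeSub {W : Type*} [MeasurableSpace W] :
    Nonempty {s : Set W // MeasurableSet s} := ⟨⟨∅, MeasurableSet.empty⟩⟩

/-- `sup_B |μ B − ν B|`, half the total variation distance. -/
noncomputable def supD {W : Type*} [MeasurableSpace W] (μ ν : Measure W) : ℝ :=
  ⨆ B : {s : Set W // MeasurableSet s}, |(μ B.1).toReal - (ν B.1).toReal|

lemma tvDist_eq {W : Type*} [MeasurableSpace W] (μ ν : Measure W) :
    tvDist μ ν = 2 * supD μ ν := rfl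

section Basic

variable {W : Type*} [MeasurableSpace W]

lemma bdd (μ ν : Measure W) [IsFiniteMeasure μ] [IsFiniteMeasure ν] :
    BddAbove (Set.range fun B : {s : Set W // MeasurableSet s} =>
      |(μ B.1).toReal - (ν B.1).toReal|) := by
  refine ⟨(μ Set.univ).toReal + (ν Set.univ).toReal, ?_⟩
  rintro x ⟨B, rfl⟩
  have h1 : (μ B.1).toReal ≤ (μ Set.univ).toReal :=
    ENNReal.toReal_mono (measure_ne_top _ _) (measure_mono (Set.subset_univ _))
  have h2 : (ν B.1).toReal ≤ (ν Set.univ).toReal :=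
    ENNReal.toReal_mono (measure_ne_top _ _) (measure_mono (Set.subset_univ _))
  have h3 : (0:ℝ) ≤ (μ B.1).toReal := ENNReal.toReal_nonneg
  have h4 : (0:ℝ) ≤ (ν B.1).toReal := ENNReal.toReal_nonneg
  rw [abs_sub_le_iff]
  constructor <;> linarith

lemma supD_nonneg (μ ν : Measure W) [IsFiniteMeasure μ] [IsFiniteMeasure ν] :
    0 ≤ supD μ ν :=
  le_trans (abs_nonneg _) (le_ciSup (bdd μ ν) ⟨∅, MeasurableSet.empty⟩)

lemma supD_comm (μ ν : Measure W) : supD μ ν = supD ν μ :=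
  iSup_congr fun B => abs_sub_comm _ _

lemma supD_self (μ : Measure W) : supD μ μ = 0 := by
  unfold supD
  simp [sub_self]

lemma supD_le_two (μ ν : Measure W) [IsProbabilityMeasure μ] [IsProbabilityMeasure ν] :
    supD μ ν ≤ 2 := by
  refine ciSup_le fun B => ?_
  have h1 : (μ B.1).toReal ≤ 1 := by
    simpa using ENNReal.toReal_mono ENNReal.one_ne_top (prob_le_one (μ := μ) (s := B.1))
  have h2 : (ν B.1).toReal ≤ 1 := by
    simpa using ENNReal.toReal_mono ENNReal.one_ne_top (prob_le_one (μ := ν) (s := B.1))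
  have h3 : (0:ℝ) ≤ (μ B.1).toReal := ENNReal.toReal_nonneg
  have h4 : (0:ℝ) ≤ (ν B.1).toReal := ENNReal.toReal_nonneg
  rw [abs_sub_le_iff]
  constructor <;> linarith

lemma lint_le_one (μ : Measure W) [IsProbabilityMeasure μ] {f : W → ℝ≥0∞}
    (hf : ∀ w, f w ≤ 1) : ∫⁻ w, f w ∂μ ≤ 1 := by
  calc ∫⁻ w, f w ∂μ ≤ ∫⁻ _, 1 ∂μ := lintegral_mono hf
    _ = 1 := by simp

/-- Key TV inequality: for `0 ≤ f ≤ 1`,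
`∫ f dμ ≤ ∫ f dν + sup_B |μ B − ν B|`. -/
lemma lintegral_sub_le (μ ν : Measure W) [IsFiniteMeasure μ] [IsFiniteMeasure ν]
    {f : W → ℝ≥0∞} (hf1 : ∀ w, f w ≤ 1) :
    (∫⁻ w, f w ∂μ).toReal ≤ (∫⁻ w, f w ∂ν).toReal + supD μ ν := by
  obtain ⟨S, hS, hS1, hS2⟩ := hahn_decomposition (μ := μ) (ν := ν)
  have hle1 : ν.restrict S ≤ μ.restrict S := by
    refine Measure.le_iff.mpr fun t ht => ?_
    rw [Measure.restrict_apply ht, Measure.restrict_apply ht]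
    exact hS1 _ (ht.inter hS) Set.inter_subset_right
  have hle2 : μ.restrict Sᶜ ≤ ν.restrict Sᶜ := by
    refine Measure.le_iff.mpr fun t ht => ?_
    rw [Measure.restrict_apply ht, Measure.restrict_apply ht]
    exact hS2 _ (ht.inter hS.compl) Set.inter_subset_right
  have hsub : (μ.restrict S - ν.restrict S) + ν.restrict S = μ.restrict S :=
    Measure.sub_add_cancel_of_le hle1
  have h1 : ∫⁻ w in S, f w ∂μ ≤ ∫⁻ w in S, f w ∂ν + (μ S - ν S) := by
    calc ∫⁻ w in S, f w ∂μ
        = ∫⁻ w, f w ∂((μ.restrict S - ν.restrict S) + ν.restrict S) := by rw [hsub]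
      _ = ∫⁻ w, f w ∂(μ.restrict S - ν.restrict S) + ∫⁻ w in S, f w ∂ν :=
          lintegral_add_measure _ _ _
      _ ≤ (μ.restrict S - ν.restrict S) Set.univ + ∫⁻ w in S, f w ∂ν := by
          gcongr
          calc ∫⁻ w, f w ∂(μ.restrict S - ν.restrict S)
              ≤ ∫⁻ _, 1 ∂(μ.restrict S - ν.restrict S) := lintegral_mono hf1
            _ = (μ.restrict S - ν.restrict S) Set.univ := by simp
      _ = (μ S - ν S) + ∫⁻ w in S, f w ∂ν := by
          rw [Measure.sub_apply MeasurableSet.univ hle1, Measure.restrict_apply_univ,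
            Measure.restrict_apply_univ]
      _ = ∫⁻ w in S, f w ∂ν + (μ S - ν S) := add_comm _ _
  have h2 : ∫⁻ w in Sᶜ, f w ∂μ ≤ ∫⁻ w in Sᶜ, f w ∂ν := lintegral_mono' hle2 le_rfl
  have h3 : ∫⁻ w, f w ∂μ ≤ ∫⁻ w, f w ∂ν + (μ S - ν S) := by
    rw [← lintegral_add_compl f hS (μ := μ), ← lintegral_add_compl f hS (μ := ν)]
    calc ∫⁻ w in S, f w ∂μ + ∫⁻ w in Sᶜ, f w ∂μ
        ≤ (∫⁻ w in S, f w ∂ν + (μ S - ν S)) + ∫⁻ w in Sᶜ, f w ∂ν := add_le_add h1 h2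
      _ = (∫⁻ w in S, f w ∂ν + ∫⁻ w in Sᶜ, f w ∂ν) + (μ S - ν S) := by ring
  have hfin1 : ∫⁻ w, f w ∂ν ≠ ⊤ := by
    refine ne_top_of_le_ne_top (measure_ne_top ν Set.univ) ?_
    calc ∫⁻ w, f w ∂ν ≤ ∫⁻ _, 1 ∂ν := lintegral_mono hf1
      _ = ν Set.univ := by simp
  have hfin2 : μ S - ν S ≠ ⊤ := ne_top_of_le_ne_top (measure_ne_top μ S) tsub_le_self
  have h4 := ENNReal.toReal_mono (ENNReal.add_ne_top.mpr ⟨hfin1, hfin2⟩) h3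
  rw [ENNReal.toReal_add hfin1 hfin2] at h4
  have h5 : (μ S - ν S).toReal ≤ |(μ S).toReal - (ν S).toReal| := by
    rcases le_total (ν S) (μ S) with h | h
    · rw [ENNReal.toReal_sub_of_le h (measure_ne_top μ S)]
      exact le_abs_self _
    · rw [tsub_eq_zero_of_le h]
      simpa using abs_nonneg ((μ S).toReal - (ν S).toReal)
  exact h4.trans (add_le_add le_rfl (h5.trans (le_ciSup (bdd μ ν) ⟨S, hS⟩)))

lemma abs_lintegral_sub_le (μ ν : Measure W) [IsFiniteMeasure μ] [IsFiniteMeasure ν]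
    {f : W → ℝ≥0∞} (hf1 : ∀ w, f w ≤ 1) :
    |(∫⁻ w, f w ∂μ).toReal - (∫⁻ w, f w ∂ν).toReal| ≤ supD μ ν := by
  rw [abs_sub_le_iff]
  refine ⟨by have := lintegral_sub_le μ ν hf1; linarith, ?_⟩
  have h := lintegral_sub_le ν μ hf1
  have h2 : supD ν μ = supD μ ν := supD_comm ν μ
  linarith

lemma ennreal_le_of_toReal {x y : ℝ≥0∞} (hx : x ≠ ⊤) (hy : y ≠ ⊤) {c : ℝ} (hc : 0 ≤ c)
    (h : x.toReal ≤ y.toReal + c) : x ≤ y + ENNReal.ofReal c := by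
  rw [← ENNReal.ofReal_toReal hx, ← ENNReal.ofReal_toReal hy,
    ← ENNReal.ofReal_add ENNReal.toReal_nonneg hc]
  exact ENNReal.ofReal_le_ofReal h

end Basic

section Snoc

variable {α : Type*} [MeasurableSpace α] {n : ℕ}

lemma measurable_snoc_pair :
    Measurable (fun q : (Fin n → α) × α => (Fin.snoc q.1 q.2 : Fin (n + 1) → α)) := by
  apply measurable_pi_lambda
  intro i
  refine Fin.lastCases ?_ (fun j => ?_) i
  · simp only [Fin.snoc_last]
    exact measurable_snd
  · simp only [Fin.snoc_castSucc]
    exact (measurable_pi_apply j).comp measurable_fst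

lemma measurable_snoc_fixed (h : Fin n → α) :
    Measurable (fun z : α => (Fin.snoc h z : Fin (n + 1) → α)) :=
  measurable_snoc_pair.comp (measurable_const.prodMk measurable_id)

end Snoc

section Strat

variable {X Y U : Type*} [MeasurableSpace X] [MeasurableSpace Y] [MeasurableSpace U]

/-- The inner integrand appearing in the one-step decomposition of `strat`. -/
noncomputable def Gfun (Q : X → Measure Y) (γ : (k : ℕ) → (Fin (k + 1) → Y) → U)
    (k : ℕ) (B : Set (Fin (k + 2) → X × Y × U))
    (h : Fin (k + 1) → X × Y × U) (x' : X) : ℝ≥0∞ :=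
  Q x' {y' | Fin.snoc h (x', y', γ (k + 1) (Fin.snoc (fun i => (h i).2.1) y')) ∈ B}

lemma Gfun_le_one (Q : X → Measure Y) (γ : (k : ℕ) → (Fin (k + 1) → Y) → U)
    (hQprob : ∀ x, IsProbabilityMeasure (Q x)) (k : ℕ)
    (B : Set (Fin (k + 2) → X × Y × U)) (h : Fin (k + 1) → X × Y × U) (x' : X) :
    Gfun Q γ k B h x' ≤ 1 := by
  haveI := hQprob x'
  exact prob_le_one

lemma Gfun_univ (Q : X → Measure Y) (γ : (k : ℕ) → (Fin (k + 1) → Y) → U)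
    (hQprob : ∀ x, IsProbabilityMeasure (Q x)) (k : ℕ)
    (h : Fin (k + 1) → X × Y × U) (x' : X) :
    Gfun Q γ k Set.univ h x' = 1 := by
  haveI := hQprob x'
  unfold Gfun
  simp

lemma measurable_phi (γ : (k : ℕ) → (Fin (k + 1) → Y) → U) (hγ : ∀ k, Measurable (γ k))
    (k : ℕ) (h : Fin (k + 1) → X × Y × U) (x' : X) :
    Measurable fun y' : Y =>
      ((x', y', γ (k + 1) (Fin.snoc (fun i => (h i).2.1) y')) : X × Y × U) :=
  measurable_const.prodMk (measurable_id.prodMk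
    ((hγ (k + 1)).comp (measurable_snoc_fixed _)))

lemma measurable_G (Q : X → Measure Y) (γ : (k : ℕ) → (Fin (k + 1) → Y) → U)
    (hQmeas : Measurable Q) (hQprob : ∀ x, IsProbabilityMeasure (Q x))
    (hγ : ∀ k, Measurable (γ k)) (k : ℕ) {B : Set (Fin (k + 2) → X × Y × U)}
    (hB : MeasurableSet B) :
    Measurable (Function.uncurry (Gfun Q γ k B)) := by
  have hκm : Measurable (fun p : (Fin (k + 1) → X × Y × U) × X => Q p.2) :=
    hQmeas.comp (measurable_snd :
      Measurable (Prod.snd : ((Fin (k + 1) → X × Y × U) × X) → X))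
  set κ : Kernel ((Fin (k + 1) → X × Y × U) × X) Y := ⟨fun p => Q p.2, hκm⟩ with hκ
  haveI : IsMarkovKernel κ := ⟨fun p => hQprob p.2⟩
  have hmap : Measurable (fun q : ((Fin (k + 1) → X × Y × U) × X) × Y =>
      (Fin.snoc q.1.1 (q.1.2, q.2, γ (k + 1) (Fin.snoc (fun i => (q.1.1 i).2.1) q.2)) :
        Fin (k + 2) → X × Y × U)) := by
    have hobs : Measurable (fun q : ((Fin (k + 1) → X × Y × U) × X) × Y =>
        (((fun i => (q.1.1 i).2.1) : Fin (k + 1) → Y), q.2)) :=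
      (measurable_pi_lambda _ fun i =>
        ((measurable_pi_apply i).comp measurable_fst.fst).snd.fst).prodMk measurable_snd
    have htrip : Measurable (fun q : ((Fin (k + 1) → X × Y × U) × X) × Y =>
        ((q.1.2, q.2, γ (k + 1) (Fin.snoc (fun i => (q.1.1 i).2.1) q.2)) : X × Y × U)) :=
      measurable_fst.snd.prodMk (measurable_snd.prodMk
        ((hγ (k + 1)).comp (measurable_snoc_pair.comp hobs)))
    exact measurable_snoc_pair.comp (measurable_fst.fst.prodMk htrip)
  have ht : MeasurableSet {q : ((Fin (k + 1) → X × Y × U) × X) × Y |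
      Fin.snoc q.1.1 (q.1.2, q.2, γ (k + 1) (Fin.snoc (fun i => (q.1.1 i).2.1) q.2)) ∈ B} :=
    hmap hB
  exact Kernel.measurable_kernel_prodMk_left (κ := κ) ht

lemma measurable_intG (Q : X → Measure Y) (γ : (k : ℕ) → (Fin (k + 1) → Y) → U)
    (hQmeas : Measurable Q) (hQprob : ∀ x, IsProbabilityMeasure (Q x))
    (hγ : ∀ k, Measurable (γ k)) (T' : X → U → Measure X)
    (hT'meas : Measurable fun p : X × U => T' p.1 p.2)
    (hT'prob : ∀ x u, IsProbabilityMeasure (T' x u)) (k : ℕ)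
    {B : Set (Fin (k + 2) → X × Y × U)} (hB : MeasurableSet B) :
    Measurable fun h : Fin (k + 1) → X × Y × U =>
      ∫⁻ x', Gfun Q γ k B h x' ∂(T' (h (Fin.last k)).1 (h (Fin.last k)).2.2) := by
  have hc : Measurable (fun h : Fin (k + 1) → X × Y × U =>
      ((h (Fin.last k)).1, (h (Fin.last k)).2.2)) :=
    ((measurable_pi_apply (Fin.last k)).fst).prodMk
      ((measurable_pi_apply (Fin.last k)).snd.snd)
  have hκm : Measurable (fun h : Fin (k + 1) → X × Y × U =>
      T' (h (Fin.last k)).1 (h (Fin.last k)).2.2) := hT'meas.comp hc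
  set κ : Kernel (Fin (k + 1) → X × Y × U) X :=
    ⟨fun h => T' (h (Fin.last k)).1 (h (Fin.last k)).2.2, hκm⟩ with hκ
  haveI : IsMarkovKernel κ := ⟨fun h => hT'prob _ _⟩
  exact Measurable.lintegral_kernel_prod_right (κ := κ)
    (measurable_G Q γ hQmeas hQprob hγ k hB)

lemma measurable_gmap (Q : X → Measure Y) (γ : (k : ℕ) → (Fin (k + 1) → Y) → U)
    (hQmeas : Measurable Q) (hQprob : ∀ x, IsProbabilityMeasure (Q x))
    (hγ : ∀ k, Measurable (γ k)) (k : ℕ) (h : Fin (k + 1) → X × Y × U) :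
    Measurable fun x' : X =>
      (Q x').map (fun y' => (x', y', γ (k + 1) (Fin.snoc (fun i => (h i).2.1) y'))) := by
  apply Measure.measurable_of_measurable_coe
  intro A hA
  have heq : ∀ x' : X,
      ((Q x').map (fun y' => (x', y', γ (k + 1) (Fin.snoc (fun i => (h i).2.1) y')))) A =
        Q x' {y' | ((x', y', γ (k + 1) (Fin.snoc (fun i => (h i).2.1) y')) : X × Y × U) ∈ A} :=
    fun x' => Measure.map_apply (measurable_phi γ hγ k h x') hA
  simp_rw [heq]
  set κ : Kernel X Y := ⟨Q, hQmeas⟩ with hκ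
  haveI : IsMarkovKernel κ := ⟨fun x => hQprob x⟩
  have hmap2 : Measurable (fun q : X × Y =>
      ((q.1, q.2, γ (k + 1) (Fin.snoc (fun i => (h i).2.1) q.2)) : X × Y × U)) :=
    measurable_fst.prodMk (measurable_snd.prodMk
      ((hγ (k + 1)).comp ((measurable_snoc_fixed (fun i => (h i).2.1)).comp
        (measurable_snd : Measurable (Prod.snd : X × Y → Y)))))
  have ht : MeasurableSet {q : X × Y |
      ((q.1, q.2, γ (k + 1) (Fin.snoc (fun i => (h i).2.1) q.2)) : X × Y × U) ∈ A} :=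
    hmap2 hA
  exact Kernel.measurable_kernel_prodMk_left (κ := κ) ht

lemma F_apply (Q : X → Measure Y) (γ : (k : ℕ) → (Fin (k + 1) → Y) → U)
    (hQmeas : Measurable Q) (hQprob : ∀ x, IsProbabilityMeasure (Q x))
    (hγ : ∀ k, Measurable (γ k)) (T' : X → U → Measure X) (k : ℕ)
    (h : Fin (k + 1) → X × Y × U) {A : Set (Fin (k + 2) → X × Y × U)}
    (hA : MeasurableSet A) :
    (((T' (h (Fin.last k)).1 (h (Fin.last k)).2.2).bind (fun x' =>
      (Q x').map (fun y' =>
        (x', y', γ (k + 1) (Fin.snoc (fun i => (h i).2.1) y'))))).map (Fin.snoc h)) A =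
      ∫⁻ x', Gfun Q γ k A h x' ∂(T' (h (Fin.last k)).1 (h (Fin.last k)).2.2) := by
  have hpre : MeasurableSet
      ((fun z : X × Y × U => (Fin.snoc h z : Fin (k + 2) → X × Y × U)) ⁻¹' A) :=
    (measurable_snoc_fixed h) hA
  rw [Measure.map_apply (measurable_snoc_fixed h) hA,
    Measure.bind_apply hpre (measurable_gmap Q γ hQmeas hQprob hγ k h).aemeasurable]
  refine lintegral_congr fun x' => ?_
  rw [Measure.map_apply (measurable_phi γ hγ k h x') hpre]
  rfl

lemma measurable_F (Q : X → Measure Y) (γ : (k : ℕ) → (Fin (k + 1) → Y) → U)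
    (hQmeas : Measurable Q) (hQprob : ∀ x, IsProbabilityMeasure (Q x))
    (hγ : ∀ k, Measurable (γ k)) (T' : X → U → Measure X)
    (hT'meas : Measurable fun p : X × U => T' p.1 p.2)
    (hT'prob : ∀ x u, IsProbabilityMeasure (T' x u)) (k : ℕ) :
    Measurable fun h : Fin (k + 1) → X × Y × U =>
      ((((T' (h (Fin.last k)).1 (h (Fin.last k)).2.2).bind (fun x' =>
        (Q x').map (fun y' =>
          (x', y', γ (k + 1) (Fin.snoc (fun i => (h i).2.1) y'))))).map (Fin.snoc h)) :
        Measure (Fin (k + 2) → X × Y × U)) := by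
  apply Measure.measurable_of_measurable_coe
  intro A hA
  have heq := fun h => F_apply Q γ hQmeas hQprob hγ T' k h hA
  simp_rw [heq]
  exact measurable_intG Q γ hQmeas hQprob hγ T' hT'meas hT'prob k hA

lemma strat_succ_apply (P : Measure X) (Q : X → Measure Y)
    (γ : (k : ℕ) → (Fin (k + 1) → Y) → U) (hQmeas : Measurable Q)
    (hQprob : ∀ x, IsProbabilityMeasure (Q x)) (hγ : ∀ k, Measurable (γ k))
    (T' : X → U → Measure X) (hT'meas : Measurable fun p : X × U => T' p.1 p.2)
    (hT'prob : ∀ x u, IsProbabilityMeasure (T' x u)) (k : ℕ)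
    {B : Set (Fin (k + 2) → X × Y × U)} (hB : MeasurableSet B) :
    strat P Q γ T' (k + 1) B = ∫⁻ h, (∫⁻ x', Gfun Q γ k B h x'
      ∂(T' (h (Fin.last k)).1 (h (Fin.last k)).2.2)) ∂(strat P Q γ T' k) := by
  show ((strat P Q γ T' k).bind _) B = _
  rw [Measure.bind_apply hB
    (measurable_F Q γ hQmeas hQprob hγ T' hT'meas hT'prob k).aemeasurable]
  exact lintegral_congr fun h => F_apply Q γ hQmeas hQprob hγ T' k h hB

lemma measurable_m0 (Q : X → Measure Y) (γ : (k : ℕ) → (Fin (k + 1) → Y) → U)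
    (hQmeas : Measurable Q) (hQprob : ∀ x, IsProbabilityMeasure (Q x))
    (hγ : ∀ k, Measurable (γ k)) :
    Measurable fun x : X =>
      (Q x).map (fun y => (fun _ : Fin 1 => (x, y, γ 0 (fun _ => y)))) := by
  apply Measure.measurable_of_measurable_coe
  intro A hA
  have hψ : ∀ x : X, Measurable (fun y : Y => (fun _ : Fin 1 => (x, y, γ 0 (fun _ => y)))) :=
    fun x => measurable_pi_lambda _ fun _ =>
      measurable_const.prodMk (measurable_id.prodMk
        ((hγ 0).comp (measurable_pi_lambda _ fun _ => measurable_id)))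
  have heq : ∀ x : X,
      ((Q x).map (fun y => (fun _ : Fin 1 => (x, y, γ 0 (fun _ => y))))) A =
        Q x {y | (fun _ : Fin 1 => (x, y, γ 0 (fun _ => y))) ∈ A} :=
    fun x => Measure.map_apply (hψ x) hA
  simp_rw [heq]
  set κ : Kernel X Y := ⟨Q, hQmeas⟩ with hκ
  haveI : IsMarkovKernel κ := ⟨fun x => hQprob x⟩
  have ht : MeasurableSet {q : X × Y | (fun _ : Fin 1 => (q.1, q.2, γ 0 (fun _ => q.2))) ∈ A} := by
    exact (measurable_pi_lambda _ fun _ =>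
      measurable_fst.prodMk (measurable_snd.prodMk
        ((hγ 0).comp (measurable_pi_lambda _ fun _ => measurable_snd)))) hA
  exact Kernel.measurable_kernel_prodMk_left (κ := κ) ht

lemma strat_prob (P : Measure X) [IsProbabilityMeasure P] (Q : X → Measure Y)
    (γ : (k : ℕ) → (Fin (k + 1) → Y) → U) (hQmeas : Measurable Q)
    (hQprob : ∀ x, IsProbabilityMeasure (Q x)) (hγ : ∀ k, Measurable (γ k))
    (T' : X → U → Measure X) (hT'meas : Measurable fun p : X × U => T' p.1 p.2)
    (hT'prob : ∀ x u, IsProbabilityMeasure (T' x u)) :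
    ∀ k, IsProbabilityMeasure (strat P Q γ T' k) := by
  intro k
  induction k with
  | zero =>
    constructor
    show (P.bind _) Set.univ = 1
    rw [Measure.bind_apply MeasurableSet.univ (measurable_m0 Q γ hQmeas hQprob hγ).aemeasurable]
    have huniv : ∀ x : X,
        ((Q x).map (fun y => (fun _ : Fin 1 => (x, y, γ 0 (fun _ => y))))) Set.univ = 1 := by
      intro x
      haveI := hQprob x
      haveI : IsProbabilityMeasure ((Q x).map
          (fun y => (fun _ : Fin 1 => (x, y, γ 0 (fun _ => y))))) := by
        refine Measure.isProbabilityMeasure_map ?_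
        exact (measurable_pi_lambda _ fun _ =>
          measurable_const.prodMk (measurable_id.prodMk
            ((hγ 0).comp (measurable_pi_lambda _ fun _ => measurable_id)))).aemeasurable
      exact measure_univ
    simp_rw [huniv]
    simp
  | succ n ih =>
    haveI := ih
    constructor
    rw [strat_succ_apply P Q γ hQmeas hQprob hγ T' hT'meas hT'prob n MeasurableSet.univ]
    have hin : ∀ h : Fin (n + 1) → X × Y × U,
        ∫⁻ x', Gfun Q γ n Set.univ h x'
          ∂(T' (h (Fin.last n)).1 (h (Fin.last n)).2.2) = 1 := by
      intro h
      haveI := hT'prob (h (Fin.last n)).1 (h (Fin.last n)).2.2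
      simp_rw [Gfun_univ Q γ hQprob n h]
      simp
    simp_rw [hin]
    simp

end Strat

end TV8

/-- two strategic measures built from the same initial
distribution `P`, the same channel `Q` and the same policy `γ`, but with
transition kernels `Tₙ` and `T` respectively, satisfy
`‖P^γ_{Tₙ} − P^γ_{T}‖_TV ≤ k · sup_{x,u} ‖Tₙ(·|x,u) − T(·|x,u)‖_TV`. -/
theorem stmt8 {X Y U : Type*} [MeasurableSpace X] [MeasurableSpace Y]
    [MeasurableSpace U]
    (P : Measure X) [IsProbabilityMeasure P]
    (Q : X → Measure Y) (hQmeas : Measurable Q)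
    (hQprob : ∀ x, IsProbabilityMeasure (Q x))
    (γ : (k : ℕ) → (Fin (k + 1) → Y) → U) (hγ : ∀ k, Measurable (γ k))
    (Tn T : X → U → Measure X)
    (hTnmeas : Measurable (fun p : X × U => Tn p.1 p.2))
    (hTmeas : Measurable (fun p : X × U => T p.1 p.2))
    (hTnprob : ∀ x u, IsProbabilityMeasure (Tn x u))
    (hTprob : ∀ x u, IsProbabilityMeasure (T x u)) :
    ∀ k : ℕ, tvDist (strat P Q γ Tn k) (strat P Q γ T k) ≤
      (k : ℝ) * ⨆ p : X × U, tvDist (Tn p.1 p.2) (T p.1 p.2) := by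
  classical
  have hXne : Nonempty X := by
    by_contra h
    have h1 : (Set.univ : Set X) = ∅ := Set.univ_eq_empty_iff.mpr (not_nonempty_iff.mp h)
    have h2 := measure_univ (μ := P)
    rw [h1, measure_empty] at h2
    exact zero_ne_one h2
  obtain ⟨x0⟩ := hXne
  have hYne : Nonempty Y := by
    by_contra h
    have h1 : (Set.univ : Set Y) = ∅ := Set.univ_eq_empty_iff.mpr (not_nonempty_iff.mp h)
    haveI := hQprob x0
    have h2 := measure_univ (μ := Q x0)
    rw [h1, measure_empty] at h2
    exact zero_ne_one h2
  obtain ⟨y0⟩ := hYne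
  set u0 : U := γ 0 (fun _ => y0) with hu0
  set ε : ℝ := ⨆ p : X × U, tvDist (Tn p.1 p.2) (T p.1 p.2) with hε
  have htvnn : ∀ p : X × U, 0 ≤ tvDist (Tn p.1 p.2) (T p.1 p.2) := by
    intro p
    haveI := hTnprob p.1 p.2
    haveI := hTprob p.1 p.2
    rw [TV8.tvDist_eq]
    have := TV8.supD_nonneg (Tn p.1 p.2) (T p.1 p.2)
    linarith
  have hbddp : BddAbove (Set.range fun p : X × U => tvDist (Tn p.1 p.2) (T p.1 p.2)) := by
    refine ⟨4, ?_⟩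
    rintro r ⟨p, rfl⟩
    haveI := hTnprob p.1 p.2
    haveI := hTprob p.1 p.2
    simp only [TV8.tvDist_eq]
    have := TV8.supD_le_two (Tn p.1 p.2) (T p.1 p.2)
    linarith
  have hεnn : 0 ≤ ε := le_trans (htvnn (x0, u0)) (le_ciSup hbddp (x0, u0))
  have hεle : ∀ x u, TV8.supD (Tn x u) (T x u) ≤ ε / 2 := by
    intro x u
    have h1 : tvDist (Tn x u) (T x u) ≤ ε := le_ciSup hbddp (x, u)
    rw [TV8.tvDist_eq] at h1
    linarith
  have hPn : ∀ j, IsProbabilityMeasure (strat P Q γ Tn j) :=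
    TV8.strat_prob P Q γ hQmeas hQprob hγ Tn hTnmeas hTnprob
  have hPt : ∀ j, IsProbabilityMeasure (strat P Q γ T j) :=
    TV8.strat_prob P Q γ hQmeas hQprob hγ T hTmeas hTprob
  -- one-step bound
  have hstep : ∀ j, TV8.supD (strat P Q γ Tn (j + 1)) (strat P Q γ T (j + 1)) ≤
      TV8.supD (strat P Q γ Tn j) (strat P Q γ T j) + ε / 2 := by
    intro j
    haveI := hPn j; haveI := hPt j; haveI := hPn (j + 1); haveI := hPt (j + 1)
    refine ciSup_le fun B0 => ?_
    obtain ⟨B, hB⟩ := B0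
    show |((strat P Q γ Tn (j + 1)) B).toReal - ((strat P Q γ T (j + 1)) B).toReal| ≤
      TV8.supD (strat P Q γ Tn j) (strat P Q γ T j) + ε / 2
    rw [TV8.strat_succ_apply P Q γ hQmeas hQprob hγ Tn hTnmeas hTnprob j hB,
      TV8.strat_succ_apply P Q γ hQmeas hQprob hγ T hTmeas hTprob j hB]
    set μ := strat P Q γ Tn j with hμ
    set ν := strat P Q γ T j with hν
    set fn : (Fin (j + 1) → X × Y × U) → ℝ≥0∞ := fun h =>
      ∫⁻ x', TV8.Gfun Q γ j B h x' ∂(Tn (h (Fin.last j)).1 (h (Fin.last j)).2.2) with hfn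
    set ft : (Fin (j + 1) → X × Y × U) → ℝ≥0∞ := fun h =>
      ∫⁻ x', TV8.Gfun Q γ j B h x' ∂(T (h (Fin.last j)).1 (h (Fin.last j)).2.2) with hft
    have hfn1 : ∀ h, fn h ≤ 1 := by
      intro h
      haveI := hTnprob (h (Fin.last j)).1 (h (Fin.last j)).2.2
      exact TV8.lint_le_one _ (fun x' => TV8.Gfun_le_one Q γ hQprob j B h x')
    have hft1 : ∀ h, ft h ≤ 1 := by
      intro h
      haveI := hTprob (h (Fin.last j)).1 (h (Fin.last j)).2.2
      exact TV8.lint_le_one _ (fun x' => TV8.Gfun_le_one Q γ hQprob j B h x')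
    have hpt : ∀ h, |(fn h).toReal - (ft h).toReal| ≤ ε / 2 := by
      intro h
      haveI := hTnprob (h (Fin.last j)).1 (h (Fin.last j)).2.2
      haveI := hTprob (h (Fin.last j)).1 (h (Fin.last j)).2.2
      exact (TV8.abs_lintegral_sub_le _ _
        (fun x' => TV8.Gfun_le_one Q γ hQprob j B h x')).trans (hεle _ _)
    have hterm1 : |(∫⁻ h, fn h ∂μ).toReal - (∫⁻ h, fn h ∂ν).toReal| ≤ TV8.supD μ ν :=
      TV8.abs_lintegral_sub_le μ ν hfn1
    have hfinn : ∫⁻ h, fn h ∂ν ≠ ⊤ :=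
      ne_top_of_le_ne_top ENNReal.one_ne_top (TV8.lint_le_one ν hfn1)
    have hfint : ∫⁻ h, ft h ∂ν ≠ ⊤ :=
      ne_top_of_le_ne_top ENNReal.one_ne_top (TV8.lint_le_one ν hft1)
    have hfnne : ∀ h, fn h ≠ ⊤ := fun h => ne_top_of_le_ne_top ENNReal.one_ne_top (hfn1 h)
    have hftne : ∀ h, ft h ≠ ⊤ := fun h => ne_top_of_le_ne_top ENNReal.one_ne_top (hft1 h)
    have hterm2 : |(∫⁻ h, fn h ∂ν).toReal - (∫⁻ h, ft h ∂ν).toReal| ≤ ε / 2 := by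
      have hc : (0:ℝ) ≤ ε / 2 := by linarith
      have c1 : ∫⁻ h, fn h ∂ν ≤ ∫⁻ h, ft h ∂ν + ENNReal.ofReal (ε / 2) := by
        calc ∫⁻ h, fn h ∂ν ≤ ∫⁻ h, (ft h + ENNReal.ofReal (ε / 2)) ∂ν := by
              refine lintegral_mono fun h => ?_
              refine TV8.ennreal_le_of_toReal (hfnne h) (hftne h) hc ?_
              have := hpt h
              rw [abs_sub_le_iff] at this
              linarith [this.1]
          _ = ∫⁻ h, ft h ∂ν + ENNReal.ofReal (ε / 2) := by
              rw [lintegral_add_right _ measurable_const, lintegral_const, measure_univ, mul_one]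
      have c2 : ∫⁻ h, ft h ∂ν ≤ ∫⁻ h, fn h ∂ν + ENNReal.ofReal (ε / 2) := by
        calc ∫⁻ h, ft h ∂ν ≤ ∫⁻ h, (fn h + ENNReal.ofReal (ε / 2)) ∂ν := by
              refine lintegral_mono fun h => ?_
              refine TV8.ennreal_le_of_toReal (hftne h) (hfnne h) hc ?_
              have := hpt h
              rw [abs_sub_le_iff] at this
              linarith [this.2]
          _ = ∫⁻ h, fn h ∂ν + ENNReal.ofReal (ε / 2) := by
              rw [lintegral_add_right _ measurable_const, lintegral_const, measure_univ, mul_one]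
      have t1 : (∫⁻ h, fn h ∂ν).toReal ≤ (∫⁻ h, ft h ∂ν).toReal + ε / 2 := by
        have h4 := ENNReal.toReal_mono
          (ENNReal.add_ne_top.mpr ⟨hfint, ENNReal.ofReal_ne_top⟩) c1
        rwa [ENNReal.toReal_add hfint ENNReal.ofReal_ne_top,
          ENNReal.toReal_ofReal hc] at h4
      have t2 : (∫⁻ h, ft h ∂ν).toReal ≤ (∫⁻ h, fn h ∂ν).toReal + ε / 2 := by
        have h4 := ENNReal.toReal_mono
          (ENNReal.add_ne_top.mpr ⟨hfinn, ENNReal.ofReal_ne_top⟩) c2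
        rwa [ENNReal.toReal_add hfinn ENNReal.ofReal_ne_top,
          ENNReal.toReal_ofReal hc] at h4
      rw [abs_sub_le_iff]
      constructor <;> linarith
    have htri := abs_sub_le ((∫⁻ h, fn h ∂μ).toReal) ((∫⁻ h, fn h ∂ν).toReal)
      ((∫⁻ h, ft h ∂ν).toReal)
    calc |(∫⁻ h, fn h ∂μ).toReal - (∫⁻ h, ft h ∂ν).toReal| ≤
        |(∫⁻ h, fn h ∂μ).toReal - (∫⁻ h, fn h ∂ν).toReal| +
          |(∫⁻ h, fn h ∂ν).toReal - (∫⁻ h, ft h ∂ν).toReal| := htri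
      _ ≤ TV8.supD μ ν + ε / 2 := add_le_add hterm1 hterm2
  -- induction
  have hD : ∀ j : ℕ, TV8.supD (strat P Q γ Tn j) (strat P Q γ T j) ≤ j * ε / 2 := by
    intro j
    induction j with
    | zero =>
      have heq : strat P Q γ Tn 0 = strat P Q γ T 0 := rfl
      rw [heq, TV8.supD_self]
      simp
    | succ n ih =>
      have h1 := hstep n
      push_cast
      push_cast at ih
      linarith
  intro k
  rw [TV8.tvDist_eq]
  have := hD k
  linarith
end

section
/- (Uniform tightness from precompactness of kernels) Let S be a family of probability measures on a Polish space X such that every sequence in S has a subsequence converging weakly to some probability measure on X (S is weakly precompact). Then S is tight: for every ε > 0 there exists a compact set K ⊆ X with μ(K) ≥ 1 − ε for all μ ∈ S. -/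
open MeasureTheory Filter Topology
open scoped ENNReal

/-- Uniform finite ball cover: for every radius `r > 0` and `η ≠ 0` there is `N` such
that the union of the first `N` balls of radius `r` around a dense sequence has
measure at least `1 - η` for every measure in `S`. -/
lemma stmt19_aux {X : Type*} [MetricSpace X] [SecondCountableTopology X]
    [MeasurableSpace X] [BorelSpace X]
    (S : Set (ProbabilityMeasure X))
    (hprecompact : ∀ μs : ℕ → ProbabilityMeasure X, (∀ n, μs n ∈ S) →
      ∃ (ν : ProbabilityMeasure X) (φ : ℕ → ℕ), StrictMono φ ∧
        Tendsto (fun n => μs (φ n)) atTop (𝓝 ν))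
    (x : ℕ → X) (hx : DenseRange x) (r : ℝ) (hr : 0 < r) (η : ℝ≥0∞) (hη : η ≠ 0) :
    ∃ N : ℕ, ∀ μ ∈ S,
      1 - η ≤ (μ : Measure X) (⋃ i ∈ Finset.range N, Metric.ball (x i) r) := by
  set G : ℕ → Set X := fun N => ⋃ i ∈ Finset.range N, Metric.ball (x i) r with hG
  have hGmono : Monotone G := by
    intro a b hab
    exact Set.biUnion_subset_biUnion_left (fun i hi => Finset.mem_range.mpr
      (lt_of_lt_of_le (Finset.mem_range.mp hi) hab))
  have hGopen : ∀ N, IsOpen (G N) := fun N =>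
    isOpen_biUnion (fun i _ => Metric.isOpen_ball)
  have hGunion : ⋃ N, G N = Set.univ := by
    ext y
    simp only [Set.mem_univ, iff_true, Set.mem_iUnion]
    obtain ⟨n, hn⟩ := Metric.denseRange_iff.mp hx y r hr
    exact ⟨n + 1, Set.mem_biUnion (Finset.self_mem_range_succ n)
      (by simpa [Metric.mem_ball, dist_comm] using hn)⟩
  by_contra h
  push_neg at h
  choose μs hmem hlt using h
  obtain ⟨ν, φ, hφ, hconv⟩ := hprecompact μs hmem
  have key : ∀ N, (ν : Measure X) (G N) ≤ 1 - η := by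
    intro N
    refine le_trans (ProbabilityMeasure.le_liminf_measure_open_of_tendsto hconv (hGopen N)) ?_
    apply liminf_le_of_frequently_le'
    apply Eventually.frequently
    filter_upwards [eventually_ge_atTop N] with k hk
    exact le_of_lt (lt_of_le_of_lt
      (measure_mono (hGmono (le_trans hk (hφ.le_apply)))) (hlt (φ k)))
  have hlim : Tendsto (fun N => (ν : Measure X) (G N)) atTop
      (𝓝 ((ν : Measure X) (⋃ N, G N))) := tendsto_measure_iUnion_atTop hGmono
  rw [hGunion, measure_univ] at hlim
  have : (1 : ℝ≥0∞) ≤ 1 - η := le_of_tendsto hlim (Eventually.of_forall key)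
  exact absurd this (not_le.mpr (ENNReal.sub_lt_self ENNReal.one_ne_top one_ne_zero hη))

/-- uniform tightness from weak precompactness, one direction of
Prokhorov's theorem on a Polish space: if every sequence in a family `S` of
probability measures on a Polish space has a subsequence converging weakly to
some probability measure, then `S` is tight: for every `ε > 0` there is a
compact `K` with `μ(K) ≥ 1 − ε` for all `μ ∈ S`. -/
theorem stmt19 {X : Type*} [MetricSpace X] [CompleteSpace X]
    [SecondCountableTopology X] [MeasurableSpace X] [BorelSpace X]
    (S : Set (ProbabilityMeasure X))
    (hprecompact : ∀ μs : ℕ → ProbabilityMeasure X, (∀ n, μs n ∈ S) →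
      ∃ (ν : ProbabilityMeasure X) (φ : ℕ → ℕ), StrictMono φ ∧
        Tendsto (fun n => μs (φ n)) atTop (𝓝 ν)) :
    ∀ ε : ℝ, 0 < ε → ∃ K : Set X, IsCompact K ∧
      ∀ μ ∈ S, 1 - ε ≤ ((μ : Measure X) K).toReal := by
  intro ε hε
  rcases S.eq_empty_or_nonempty with hS | ⟨μ0, hμ0⟩
  · exact ⟨∅, isCompact_empty, by simp [hS]⟩
  have hXne : Nonempty X := by
    by_contra hX
    have : (μ0 : Measure X) Set.univ = 1 := measure_univ
    rw [Set.univ_eq_empty_iff.mpr (not_nonempty_iff.mp hX), measure_empty] at this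
    exact zero_ne_one this
  obtain ⟨x, hx⟩ : ∃ x : ℕ → X, DenseRange x :=
    ⟨TopologicalSpace.denseSeq X, TopologicalSpace.denseRange_denseSeq X⟩
  -- choose N m for radius 1/(m+1) and error ε/2^(m+1)
  have hεm : ∀ m : ℕ, (ENNReal.ofReal ε / 2 ^ (m + 1)) ≠ 0 := by
    intro m
    simp [ENNReal.div_eq_zero_iff, ENNReal.ofReal_eq_zero, not_le, hε,
      ENNReal.pow_eq_top_iff]
  have hrm : ∀ m : ℕ, (0 : ℝ) < 1 / (m + 1) := fun m => by positivity
  choose N hN using fun m : ℕ =>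
    stmt19_aux S hprecompact x hx (1 / ((m : ℝ) + 1)) (hrm m)
      (ENNReal.ofReal ε / 2 ^ (m + 1)) (hεm m)
  set A : ℕ → Set X := fun m => ⋃ i ∈ Finset.range (N m), Metric.closedBall (x i) (1 / (m + 1))
    with hA
  have hAclosed : ∀ m, IsClosed (A m) := fun m =>
    Set.Finite.isClosed_biUnion (Finset.finite_toSet _) (fun i _ => Metric.isClosed_closedBall)
  refine ⟨⋂ m, A m, ?_, ?_⟩
  · refine TotallyBounded.isCompact_of_isClosed ?_ (isClosed_iInter hAclosed)
    rw [Metric.totallyBounded_iff]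
    intro δ hδ
    obtain ⟨m, hm⟩ := exists_nat_one_div_lt hδ
    refine ⟨x '' (Finset.range (N m)), (Finset.range (N m)).finite_toSet.image x, ?_⟩
    intro y hy
    have hy' : y ∈ A m := Set.mem_iInter.mp hy m
    obtain ⟨i, hi, hyi⟩ := Set.mem_iUnion₂.mp hy'
    exact Set.mem_biUnion (Set.mem_image_of_mem x hi)
      (lt_of_le_of_lt (Metric.mem_closedBall.mp hyi) hm)
  · intro μ hμ
    have hcompl : (μ : Measure X) (⋂ m, A m)ᶜ ≤ ENNReal.ofReal ε := by
      rw [Set.compl_iInter]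
      refine le_trans (measure_iUnion_le _) ?_
      have hterm : ∀ m, (μ : Measure X) (A m)ᶜ ≤ ENNReal.ofReal ε / 2 ^ (m + 1) := by
        intro m
        have hball : 1 - ENNReal.ofReal ε / 2 ^ (m + 1) ≤ (μ : Measure X) (A m) := by
          refine le_trans (hN m μ hμ) (measure_mono ?_)
          exact Set.iUnion₂_mono (fun i _ => Metric.ball_subset_closedBall)
        rw [prob_compl_eq_one_sub (hAclosed m).measurableSet]
        rw [tsub_le_iff_right]
        calc (1 : ℝ≥0∞) ≤ (1 - ENNReal.ofReal ε / 2 ^ (m + 1)) +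
              ENNReal.ofReal ε / 2 ^ (m + 1) := le_tsub_add
          _ ≤ _ := by rw [add_comm]; exact add_le_add le_rfl hball
      refine le_trans (ENNReal.tsum_le_tsum hterm) ?_
      have hhalf : ∑' m : ℕ, (2 : ℝ≥0∞)⁻¹ ^ (m + 1) = 1 := by
        have h2 : ∑' m : ℕ, (2 : ℝ≥0∞)⁻¹ ^ (m + 1) = 2⁻¹ * ∑' m : ℕ, (2 : ℝ≥0∞)⁻¹ ^ m := by
          rw [← ENNReal.tsum_mul_left]
          exact tsum_congr fun m => (pow_succ' _ _)
        rw [h2, ENNReal.tsum_geometric, ENNReal.one_sub_inv_two,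
          ENNReal.mul_inv_cancel (by norm_num) (by norm_num)]
      have : ∑' m : ℕ, ENNReal.ofReal ε / 2 ^ (m + 1) = ENNReal.ofReal ε :=
        calc ∑' m : ℕ, ENNReal.ofReal ε / 2 ^ (m + 1)
            = ∑' m : ℕ, ENNReal.ofReal ε * (2 : ℝ≥0∞)⁻¹ ^ (m + 1) :=
              tsum_congr fun m => by rw [div_eq_mul_inv, ← ENNReal.inv_pow]
          _ = ENNReal.ofReal ε * ∑' m : ℕ, (2 : ℝ≥0∞)⁻¹ ^ (m + 1) := ENNReal.tsum_mul_left
          _ = ENNReal.ofReal ε := by rw [hhalf, mul_one]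
      rw [this]
    have hmeas : MeasurableSet (⋂ m, A m) := (isClosed_iInter hAclosed).measurableSet
    have h1 : (μ : Measure X) (⋂ m, A m) + (μ : Measure X) (⋂ m, A m)ᶜ = 1 :=
      (measure_add_measure_compl hmeas).trans measure_univ
    have hKne : (μ : Measure X) (⋂ m, A m) ≠ ⊤ := measure_ne_top _ _
    have hCne : (μ : Measure X) (⋂ m, A m)ᶜ ≠ ⊤ := measure_ne_top _ _
    have h1' : ((μ : Measure X) (⋂ m, A m)).toReal
        + ((μ : Measure X) (⋂ m, A m)ᶜ).toReal = 1 := by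
      rw [← ENNReal.toReal_add hKne hCne, h1, ENNReal.toReal_one]
    have h2 : ((μ : Measure X) (⋂ m, A m)ᶜ).toReal ≤ ε :=
      ENNReal.toReal_le_of_le_ofReal hε.le hcompl
    linarith
end
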